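/- For any nonnegative integer k and any number x (in a commutative ring where the relevant denominators are invertible, e.g. the rationals), the identity ((x)_k (1-x)_k / (k!)^2) * ∑_{i=0}^{k-1} (1/(x+i) + 1/(1-x+i)) = ∑_{i=0}^{k-1} ((x)_i (1-x)_i / (i!)^2) * 1/(k-i) holds, where (a)_j = a(a+1)⋯(a+j-1) is the Pochhammer symbol. -/

import Mathlib

def Apoch (x : ℚ) (i : ℕ) : ℚ :=
  (∏ j ∈ Finset.range i, (x + j)) * (∏ j ∈ Finset.range i, (1 - x + j)) / (i.factorial : ℚ) ^ 2

def Spoch (x : ℚ) (k : ℕ) : ℚ :=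
  ∑ i ∈ Finset.range k, (1 / (x + i) + 1 / (1 - x + i))

def Tpoch (x : ℚ) (k : ℕ) : ℚ :=
  ∑ i ∈ Finset.range k, Apoch x i * (1 / ((k : ℚ) - i))

lemma Apoch_rec (x : ℚ) (k : ℕ) :
    ((k : ℚ) + 1) ^ 2 * Apoch x (k + 1) = (x + k) * (1 - x + k) * Apoch x k := by
  unfold Apoch
  rw [Finset.prod_range_succ, Finset.prod_range_succ, Nat.factorial_succ]
  have h : (k.factorial : ℚ) ≠ 0 := Nat.cast_ne_zero.2 k.factorial_ne_zero
  have hk : ((k : ℚ) + 1) ≠ 0 := by positivity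
  push_cast
  field_simp

lemma Tpoch_rec (x : ℚ) (k : ℕ) :
    ((k : ℚ) + 1) ^ 2 * Tpoch x (k + 1)
      = (x + k) * (1 - x + k) * Tpoch x k + (2 * k + 1) * Apoch x k := by
  have e1 : ((k : ℚ) + 1) ^ 2 * Tpoch x (k + 1)
      = ∑ i ∈ Finset.range (k + 1),
          (((k : ℚ) + 1 + i) * Apoch x i
            + (i : ℚ) ^ 2 * Apoch x i * (1 / (((k : ℚ) + 1) - i))) := by
    rw [Tpoch, Finset.mul_sum]
    refine Finset.sum_congr rfl fun i hi => ?_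
    have hi' : (i : ℚ) ≤ k := by exact_mod_cast Nat.lt_succ_iff.1 (Finset.mem_range.1 hi)
    have h0 : ((k : ℚ) + 1) - (i : ℚ) ≠ 0 := by intro h; nlinarith [h]
    push_cast
    field_simp
    ring
  have e2 : (x + k) * (1 - x + k) * Tpoch x k
      = ∑ i ∈ Finset.range k,
          (((k : ℚ) + 1 + i) * Apoch x i
            + ((i : ℚ) + 1) ^ 2 * Apoch x (i + 1) * (1 / (((k : ℚ) + 1) - ((i : ℚ) + 1)))) := by
    rw [Tpoch, Finset.mul_sum]
    refine Finset.sum_congr rfl fun i hi => ?_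
    have hi' : (i : ℚ) < k := by exact_mod_cast Finset.mem_range.1 hi
    have h0 : (k : ℚ) - (i : ℚ) ≠ 0 := sub_ne_zero.2 (ne_of_gt hi')
    have hr := Apoch_rec x i
    have h1 : ((k : ℚ) + 1) - ((i : ℚ) + 1) = (k : ℚ) - i := by ring
    rw [h1]
    field_simp
    linear_combination -hr
  rw [e1, e2, Finset.sum_add_distrib, Finset.sum_add_distrib]
  have e3 : ∑ i ∈ Finset.range k,
        ((i : ℚ) + 1) ^ 2 * Apoch x (i + 1) * (1 / (((k : ℚ) + 1) - ((i : ℚ) + 1)))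
      = ∑ i ∈ Finset.range (k + 1),
        (i : ℚ) ^ 2 * Apoch x i * (1 / (((k : ℚ) + 1) - i)) := by
    rw [Finset.sum_range_succ' (fun i => (i : ℚ) ^ 2 * Apoch x i * (1 / (((k : ℚ) + 1) - i))) k]
    push_cast
    simp
  rw [e3, Finset.sum_range_succ (fun i => ((k : ℚ) + 1 + i) * Apoch x i) k]
  ring

lemma main_identity (x : ℚ) (h1 : ∀ j : ℕ, x + (j : ℚ) ≠ 0) (h2 : ∀ j : ℕ, 1 - x + (j : ℚ) ≠ 0) :
    ∀ k : ℕ, Apoch x k * Spoch x k = Tpoch x k := by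
  intro k
  induction k with
  | zero => simp [Spoch, Tpoch]
  | succ k ih =>
    have hk1 : ((k : ℚ) + 1) ^ 2 ≠ 0 := by positivity
    refine mul_left_cancel₀ hk1 ?_
    have hS : Spoch x (k + 1) = Spoch x k + (1 / (x + k) + 1 / (1 - x + k)) := by
      rw [Spoch, Finset.sum_range_succ]; rfl
    have h3 : (x + (k : ℚ)) * (1 - x + k) * (1 / (x + k) + 1 / (1 - x + k)) = 2 * k + 1 := by
      field_simp [h1 k, h2 k]
      ring
    rw [hS]
    linear_combination (Spoch x k + 1 / (x + (k : ℚ)) + 1 / (1 - x + k)) * Apoch_rec x k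
      + (x + (k : ℚ)) * (1 - x + k) * ih + Apoch x k * h3 - Tpoch_rec x k

theorem pochhammer_harmonic_identity (k : ℕ) (x : ℚ) (hx : ∀ n : ℤ, x ≠ n) :
    ((∏ i ∈ Finset.range k, (x + i)) * (∏ i ∈ Finset.range k, (1 - x + i)) / (k.factorial : ℚ) ^ 2) *
      (∑ i ∈ Finset.range k, (1 / (x + i) + 1 / (1 - x + i)))
    = ∑ i ∈ Finset.range k,
        ((∏ j ∈ Finset.range i, (x + j)) * (∏ j ∈ Finset.range i, (1 - x + j)) / (i.factorial : ℚ) ^ 2)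
          * (1 / ((k : ℚ) - i)) := by
  have h1 : ∀ j : ℕ, x + (j : ℚ) ≠ 0 := by
    intro j h
    exact hx (-j) (by push_cast; linarith)
  have h2 : ∀ j : ℕ, 1 - x + (j : ℚ) ≠ 0 := by
    intro j h
    exact hx (j + 1) (by push_cast; linarith)
  have := main_identity x h1 h2 k
  simpa [Apoch, Spoch, Tpoch] using this
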